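/- Let n be an even integer with n ≥ 8 or n = 4, and let G be a connected graph on n vertices such that there exists S ⊆ V(G) with o(G − S) ≥ |S| + 2. Then ρ(G) ≤ θ(n), where θ(n) is the largest root of x^3 − (n−4)x^2 − (n−1)x + 2(n−4) = 0; moreover ρ(K_1 ∨ (K_{n-3} ∪ 2K_1)) = θ(n). -/

import Mathlib

open SimpleGraph

open scoped Classical in
/-- The adjacency spectral radius of a finite simple graph: the largest real
eigenvalue of its adjacency matrix. -/
noncomputable def specRad {V : Type*} [Fintype V] (G : SimpleGraph V) : ℝ :=
  sSup {μ : ℝ | ∃ v : V → ℝ, v ≠ 0 ∧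
    Matrix.mulVec (Matrix.of fun i j => if G.Adj i j then (1:ℝ) else 0) v = μ • v}

/-- The join of two simple graphs: their disjoint union together with all
edges between the two parts. -/
def gJoin {α β : Type*} (G : SimpleGraph α) (H : SimpleGraph β) : SimpleGraph (α ⊕ β) :=
  (G ⊕g H) ⊔ SimpleGraph.fromRel (fun x y => x.isLeft ∧ y.isRight)

/-- The number of odd components (connected components of odd order) of a graph. -/
noncomputable def oddComp {α : Type*} (H : SimpleGraph α) : ℕ :=
  Nat.card {c : H.ConnectedComponent // Odd (Nat.card c.supp)}

open Matrix Finset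

private lemma aux_theta_lb (n : ℕ) (θ : ℝ) (hn4 : 4 ≤ n)
    (hθmax : ∀ x : ℝ,
      x ^ 3 - ((n : ℝ) - 4) * x ^ 2 - ((n : ℝ) - 1) * x + 2 * ((n : ℝ) - 4) = 0 → x ≤ θ) :
    (n : ℝ) - 3 < θ := by
  have hn : (4:ℝ) ≤ n := by exact_mod_cast hn4
  have hcont : ContinuousOn (fun x : ℝ => x ^ 3 - ((n : ℝ) - 4) * x ^ 2 - ((n : ℝ) - 1) * x + 2 * ((n : ℝ) - 4)) (Set.Icc ((n:ℝ)-3) n) := by fun_prop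
  have hle : (n:ℝ) - 3 ≤ n := by linarith
  have hIVT := intermediate_value_Icc hle hcont
  have hmem : (0:ℝ) ∈ Set.Icc (((n:ℝ)-3) ^ 3 - ((n : ℝ) - 4) * ((n:ℝ)-3) ^ 2 - ((n : ℝ) - 1) * ((n:ℝ)-3) + 2 * ((n : ℝ) - 4)) ((n:ℝ) ^ 3 - ((n : ℝ) - 4) * (n:ℝ) ^ 2 - ((n : ℝ) - 1) * (n:ℝ) + 2 * ((n : ℝ) - 4)) := by
    constructor
    · nlinarith
    · nlinarith
  obtain ⟨c, hc, hc0⟩ := hIVT hmem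
  simp only at hc0
  have hcθ := hθmax c hc0
  have hne : c ≠ (n:ℝ) - 3 := by
    intro h
    rw [h] at hc0
    nlinarith
  rcases lt_or_eq_of_le hc.1 with h | h
  · linarith
  · exact absurd h.symm hne

private lemma aux_smooth (c a b : ℝ) (ha : 1 ≤ a) (hb : 1 ≤ b) (hab : a + b - 1 < c) :
    a / (c - a) + b / (c - b) ≤ 1 / (c - 1) + (a + b - 1) / (c - (a + b - 1)) := by
  have h1 : 0 < c - (a + b - 1) := by linarith
  have h2 : 0 < c - a := by linarith
  have h3 : 0 < c - b := by linarith
  have h4 : 0 < c - 1 := by linarith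
  rw [div_add_div _ _ h2.ne' h3.ne', div_add_div _ _ h4.ne' h1.ne',
    div_le_div_iff₀ (by positivity) (by positivity)]
  nlinarith [mul_nonneg (sub_nonneg.2 ha) (sub_nonneg.2 hb), mul_pos h2 h3, mul_pos h4 h1,
    mul_nonneg (mul_nonneg (sub_nonneg.2 ha) (sub_nonneg.2 hb)) h1.le,
    mul_nonneg (mul_nonneg (sub_nonneg.2 ha) (sub_nonneg.2 hb)) h4.le,
    mul_nonneg (mul_nonneg (mul_nonneg (sub_nonneg.2 ha) (sub_nonneg.2 hb)) h4.le) h1.le]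

private lemma aux_sum_g (c : ℝ) (hc : 1 < c) :
    ∀ (q : ℕ) (a : ℕ → ℝ), (∀ k, k ≤ q → 1 ≤ a k) →
    ((∑ k ∈ Finset.range (q+1), a k) - q < c) →
    ∑ k ∈ Finset.range (q+1), a k / (c - a k) ≤
      ((∑ k ∈ Finset.range (q+1), a k) - q) / (c - ((∑ k ∈ Finset.range (q+1), a k) - q))
        + q / (c - 1) := by
  intro q
  induction q with
  | zero => intro a _ _; simp
  | succ q ih =>
    intro a h1 hs
    have hb : 1 ≤ a (q+1) := h1 _ le_rfl
    have hsum1 : (q:ℝ) + 1 ≤ ∑ k ∈ Finset.range (q+1), a k := by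
      calc (q:ℝ) + 1 = ∑ _k ∈ Finset.range (q+1), (1:ℝ) := by simp
        _ ≤ _ := Finset.sum_le_sum (fun k hk => h1 k (by
            have := Finset.mem_range.1 hk; omega))
    rw [Finset.sum_range_succ] at hs
    push_cast at hs
    rw [Finset.sum_range_succ (f := fun k => a k / (c - a k)), Finset.sum_range_succ a (q+1)]
    push_cast
    set T := ∑ k ∈ Finset.range (q+1), a k with hT
    have hs' : T - (q:ℝ) < c := by linarith
    have ihq := ih a (fun k hk => h1 k (by omega)) hs'
    have hTq : 1 ≤ T - (q:ℝ) := by linarith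
    have hsm := aux_smooth c (T - (q:ℝ)) (a (q+1)) hTq hb (by linarith)
    have hz : T - (q:ℝ) + a (q+1) - 1 = T + a (q+1) - ((q:ℝ)+1) := by ring
    rw [hz] at hsm
    have hfin : ((q:ℝ)/(c-1)) + 1/(c-1) = ((q:ℝ)+1)/(c-1) := (add_div _ _ _).symm
    linarith

private lemma aux_KI (n s : ℕ) (θ : ℝ)
    (hroot : θ ^ 3 - ((n : ℝ) - 4) * θ ^ 2 - ((n : ℝ) - 1) * θ + 2 * ((n : ℝ) - 4) = 0)
    (hθ3 : (n : ℝ) - 3 < θ) (hn4 : 4 ≤ n) (hn : 8 ≤ n ∨ n = 4)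
    (hs1 : 1 ≤ s) (hsn : 2 * s + 2 ≤ n) :
    (s:ℝ) * (((n:ℝ) - 2*s - 1) / (θ + 2*s + 2 - n) + ((s:ℝ) + 1) / θ) ≤ θ + 1 - s := by
  have hn4' : (4:ℝ) ≤ n := by exact_mod_cast hn4
  have hs1' : (1:ℝ) ≤ s := by exact_mod_cast hs1
  have hsn' : 2*(s:ℝ) + 2 ≤ n := by exact_mod_cast hsn
  have hθpos : 0 < θ := by linarith
  have hD : 0 < θ + 2*(s:ℝ) + 2 - n := by linarith
  have hQ : 0 ≤ (θ + 1 - (s:ℝ)) * ((θ + 2*(s:ℝ) + 2 - n) * θ)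
      - (s:ℝ) * (((n:ℝ) - 2*(s:ℝ) - 1) * θ + ((s:ℝ) + 1) * (θ + 2*(s:ℝ) + 2 - n)) := by
    have hkey : (θ + 1 - (s:ℝ)) * ((θ + 2*(s:ℝ) + 2 - n) * θ)
        - (s:ℝ) * (((n:ℝ) - 2*(s:ℝ) - 1) * θ + ((s:ℝ) + 1) * (θ + 2*(s:ℝ) + 2 - n))
        = (θ ^ 3 - ((n : ℝ) - 4) * θ ^ 2 - ((n : ℝ) - 1) * θ + 2 * ((n : ℝ) - 4))
          + (((s:ℝ) - 1) * (θ * (θ - (s:ℝ) - 1)) + ((n:ℝ)-4)*(s:ℝ)^2 + ((n:ℝ)-2)*(s:ℝ)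
            - 2*(s:ℝ)^3 - 2*((n:ℝ)-4)) := by
      ring
    rw [hkey, hroot, zero_add]
    rcases eq_or_lt_of_le hs1' with h1 | h2
    · rw [← h1]; ring_nf
      try exact le_rfl
    · have hs2 : 2 ≤ s := by
        have h2' : 1 < s := by exact_mod_cast h2
        omega
      have hσ2 : (2:ℝ) ≤ (s:ℝ) := by exact_mod_cast hs2
      have hn8 : (8:ℝ) ≤ n := by
        rcases hn with h | h
        · exact_mod_cast h
        · exfalso; rw [h] at hsn; omega
      have e1 : (0:ℝ) ≤ (s:ℝ) - 1 := by linarith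
      have e2 : (0:ℝ) ≤ (n:ℝ) - 2*(s:ℝ) - 2 := by linarith
      have e3 : (0:ℝ) ≤ (s:ℝ) - 2 := by linarith
      have e5 : (0:ℝ) ≤ (n:ℝ) - 8 := by linarith
      have hb1 : ((n:ℝ) - 3) * ((n:ℝ) - (s:ℝ) - 4) ≤ θ * (θ - (s:ℝ) - 1) := by
        apply mul_le_mul (le_of_lt hθ3) (by linarith) (by linarith) (by linarith)
      have hb2 : ((s:ℝ) - 1) * (((n:ℝ) - 3) * ((n:ℝ) - (s:ℝ) - 4))
          ≤ ((s:ℝ) - 1) * (θ * (θ - (s:ℝ) - 1)) := mul_le_mul_of_nonneg_left hb1 e1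
      have hR : 0 ≤ ((s:ℝ) - 1) * (((n:ℝ) - 3) * ((n:ℝ) - (s:ℝ) - 4)) + ((n:ℝ)-4)*(s:ℝ)^2
          + ((n:ℝ)-2)*(s:ℝ) - 2*(s:ℝ)^3 - 2*((n:ℝ)-4) := by
        nlinarith [mul_nonneg e3 e5, mul_nonneg (mul_nonneg e3 e3) e3, mul_nonneg e3 e2,
          mul_nonneg (mul_nonneg e3 e3) e2, mul_nonneg e2 e2, mul_nonneg e3 (mul_nonneg e2 e2),
          mul_nonneg e2 e5]
      linarith
  have hexp : (s:ℝ) * (((n:ℝ) - 2*(s:ℝ) - 1) / (θ + 2*(s:ℝ) + 2 - n) + ((s:ℝ) + 1) / θ)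
      = (s:ℝ) * (((n:ℝ) - 2*(s:ℝ) - 1) * θ + ((s:ℝ) + 1) * (θ + 2*(s:ℝ) + 2 - n))
        / ((θ + 2*(s:ℝ) + 2 - n) * θ) := by
    rw [div_add_div _ _ hD.ne' hθpos.ne']
    try ring
  rw [hexp, div_le_iff₀ (by positivity)]
  linarith

private lemma aux_rayleigh {V : Type*} [Fintype V] [DecidableEq V] (M : Matrix V V ℝ)
    (hsym : M.IsHermitian) (θ : ℝ)
    (h : ∀ (μ : ℝ) (w : V → ℝ), w ≠ 0 → M *ᵥ w = μ • w → μ ≤ θ) (x : V → ℝ) :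
    x ⬝ᵥ (M *ᵥ x) ≤ θ * (x ⬝ᵥ x) := by
  have hN : (θ • (1 : Matrix V V ℝ) - M).IsHermitian := by
    unfold Matrix.IsHermitian
    rw [Matrix.conjTranspose_sub, Matrix.conjTranspose_smul, Matrix.conjTranspose_one, hsym.eq]
    norm_num
  have hev : ∀ i, 0 ≤ hN.eigenvalues i := by
    intro i
    have hb := hN.mulVec_eigenvectorBasis i
    set w : V → ℝ := ⇑(hN.eigenvectorBasis i) with hw
    have hw0 : w ≠ 0 := by
      intro hh
      exact hN.eigenvectorBasis.orthonormal.ne_zero i (by ext t; exact congrFun hh t)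
    have hexp : (θ • (1 : Matrix V V ℝ) - M) *ᵥ w = θ • w - M *ᵥ w := by
      rw [Matrix.sub_mulVec, Matrix.smul_mulVec, Matrix.one_mulVec]
    rw [hexp] at hb
    have hMw : M *ᵥ w = (θ - hN.eigenvalues i) • w := by
      rw [sub_smul]
      rw [← hb]
      abel
    have := h _ w hw0 hMw
    linarith
  have hpsd := (Matrix.IsHermitian.posSemidef_iff_eigenvalues_nonneg hN).2 (fun i => hev i)
  have h2 := hpsd.dotProduct_mulVec_nonneg x
  have hsx : star x = x := by ext i; simp
  rw [hsx, Matrix.sub_mulVec, Matrix.smul_mulVec, Matrix.one_mulVec] at h2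
  rw [dotProduct_sub, dotProduct_smul] at h2
  simp only [smul_eq_mul] at h2
  linarith

set_option maxHeartbeats 1000000 in
open scoped Classical in
private lemma aux_core {V : Type*} [Fintype V] (K : SimpleGraph V) (S : Finset V)
    (pt : V → ℕ) (n : ℕ)
    (hadj : ∀ u v : V, K.Adj u v ↔ u ≠ v ∧ (u ∈ S ∨ v ∈ S ∨ pt u = pt v))
    (hcard : Fintype.card V = n)
    (hs1 : 1 ≤ S.card)
    (hpt : ∀ v : V, v ∉ S → pt v < S.card + 2)
    (hne : ∀ k, k < S.card + 2 → ∃ v : V, v ∉ S ∧ pt v = k)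
    (θ : ℝ)
    (hroot : θ ^ 3 - ((n : ℝ) - 4) * θ ^ 2 - ((n : ℝ) - 1) * θ + 2 * ((n : ℝ) - 4) = 0)
    (hθ3 : (n : ℝ) - 3 < θ) (hn4 : 4 ≤ n) (hn : 8 ≤ n ∨ n = 4)
    (μ : ℝ) (v : V → ℝ) (hv : v ≠ 0)
    (heig : ∀ u : V, ∑ j : V, (if K.Adj u j then (1:ℝ) else 0) * v j = μ * v u) :
    μ ≤ θ := by
  by_contra hcon
  push_neg at hcon
  set s := S.card with hsdef
  have hn4' : (4:ℝ) ≤ n := by exact_mod_cast hn4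
  have hs1' : (1:ℝ) ≤ s := by exact_mod_cast hs1
  have hθ1 : 1 < θ := by linarith
  have hμ1 : 0 < μ + 1 := by linarith
  set T := ∑ u : V, v u with hT
  set W := ∑ u ∈ S, v u with hW
  set P : ℕ → Finset V := fun k => univ.filter (fun x => x ∉ S ∧ pt x = k) with hP
  set σ : ℕ → ℝ := fun k => ∑ u ∈ P k, v u with hσ
  set a : ℕ → ℝ := fun k => ((P k).card : ℝ) with ha
  -- equation for u ∈ S
  have key1 : ∀ u ∈ S, (μ + 1) * v u = T := by
    intro u hu
    have h0 := heig u
    have hsum : ∑ j : V, (if K.Adj u j then (1:ℝ) else 0) * v j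
        = ∑ j ∈ univ.erase u, v j := by
      rw [Finset.sum_congr rfl (g := fun j => if j ∈ univ.erase u then v j else 0)
        (fun j _ => ?_), Finset.sum_ite_mem, Finset.univ_inter]
      show (if K.Adj u j then (1:ℝ) else 0) * v j = if j ∈ Finset.univ.erase u then v j else 0
      by_cases hj : K.Adj u j
      · rw [if_pos hj, one_mul, if_pos]
        exact Finset.mem_erase.2 ⟨fun h => ((hadj u j).1 hj).1 h.symm, Finset.mem_univ j⟩
      · rw [if_neg hj, zero_mul, if_neg]
        intro hmem
        exact hj ((hadj u j).2 ⟨fun h => (Finset.mem_erase.1 hmem).1 h.symm, Or.inl hu⟩)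
    rw [hsum, Finset.sum_erase_eq_sub (Finset.mem_univ u)] at h0
    rw [← hT] at h0
    linarith
  -- equation for u ∉ S
  have key2 : ∀ u : V, u ∉ S → (μ + 1) * v u = W + σ (pt u) := by
    intro u hu
    have h0 := heig u
    have humem : u ∈ S ∪ P (pt u) :=
      Finset.mem_union_right _ (Finset.mem_filter.2 ⟨Finset.mem_univ u, hu, rfl⟩)
    have hsum : ∑ j : V, (if K.Adj u j then (1:ℝ) else 0) * v j
        = ∑ j ∈ (S ∪ P (pt u)).erase u, v j := by
      rw [Finset.sum_congr rfl (g := fun j => if j ∈ (S ∪ P (pt u)).erase u then v j else 0)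
        (fun j _ => ?_), Finset.sum_ite_mem, Finset.univ_inter]
      show (if K.Adj u j then (1:ℝ) else 0) * v j
        = if j ∈ (S ∪ P (pt u)).erase u then v j else 0
      by_cases hj : K.Adj u j
      · rw [if_pos hj, one_mul, if_pos]
        obtain ⟨hne', hor⟩ := (hadj u j).1 hj
        refine Finset.mem_erase.2 ⟨fun h => hne' h.symm, ?_⟩
        rcases hor with h | h | h
        · exact absurd h hu
        · exact Finset.mem_union_left _ h
        · by_cases hjS : j ∈ S
          · exact Finset.mem_union_left _ hjS
          · refine Finset.mem_union_right _ ?_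
            simp only [hP, Finset.mem_filter, Finset.mem_univ, true_and]
            exact ⟨hjS, h.symm⟩
      · rw [if_neg hj, zero_mul, if_neg]
        intro hmem
        obtain ⟨hju, hjun⟩ := Finset.mem_erase.1 hmem
        refine hj ((hadj u j).2 ⟨fun h => hju h.symm, ?_⟩)
        rcases Finset.mem_union.1 hjun with h | h
        · exact Or.inr (Or.inl h)
        · simp only [hP, Finset.mem_filter, Finset.mem_univ, true_and] at h
          exact Or.inr (Or.inr h.2.symm)
    have hdisj : Disjoint S (P (pt u)) := by
      refine Finset.disjoint_left.2 fun x hx hx' => ?_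
      simp only [hP, Finset.mem_filter, Finset.mem_univ, true_and] at hx'
      exact hx'.1 hx
    rw [hsum, Finset.sum_erase_eq_sub humem, Finset.sum_union hdisj] at h0
    have hσu : σ (pt u) = ∑ x ∈ P (pt u), v x := rfl
    rw [← hW, ← hσu] at h0
    linarith
  -- sum of key2 over a part
  have key3 : ∀ k, (μ + 1 - a k) * σ k = a k * W := by
    intro k
    have h1 : ∑ u ∈ P k, ((μ + 1) * v u) = ∑ u ∈ P k, (W + σ k) := by
      refine Finset.sum_congr rfl fun u hu => ?_
      simp only [hP, Finset.mem_filter, Finset.mem_univ, true_and] at hu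
      rw [key2 u hu.1, hu.2]
    rw [← Finset.mul_sum, Finset.sum_const, nsmul_eq_mul] at h1
    have hσr : σ k = ∑ u ∈ P k, v u := rfl
    have har : a k = ((P k).card : ℝ) := rfl
    rw [← hσr, ← har] at h1
    nlinarith [h1]
  -- cardinalities
  have hsn : s ≤ n := by rw [← hcard, hsdef]; exact Finset.card_le_univ S
  have hPk : ∀ k, (univ \ S).filter (fun x => pt x = k) = P k := by
    intro k
    ext x
    simp [hP, Finset.mem_sdiff]
  have hsum_aN : ∑ k ∈ Finset.range (s+2), (P k).card = n - s := by
    rw [hsdef, ← hcard, ← Finset.card_univ_diff]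
    rw [Finset.card_eq_sum_card_fiberwise (f := pt) (t := Finset.range (s+2))
      (fun x hx => Finset.mem_range.2 (hpt x (Finset.mem_sdiff.1 hx).2))]
    exact Finset.sum_congr rfl fun k _ => by rw [hPk k]
  have hsum_a : ∑ k ∈ Finset.range (s+2), a k = (n:ℝ) - s := by
    have h1 : ∑ k ∈ Finset.range (s+2), a k
        = ((∑ k ∈ Finset.range (s+2), (P k).card : ℕ) : ℝ) := by push_cast; rfl
    rw [h1, hsum_aN, Nat.cast_sub hsn]
  have ha1 : ∀ k, k < s+2 → (1:ℝ) ≤ a k := by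
    intro k hk
    obtain ⟨x, hx1, hx2⟩ := hne k hk
    have : x ∈ P k := by
      simp only [hP, Finset.mem_filter, Finset.mem_univ, true_and]; exact ⟨hx1, hx2⟩
    have h2 : 1 ≤ (P k).card := Finset.card_pos.2 ⟨x, this⟩
    show (1:ℝ) ≤ ((P k).card : ℝ)
    exact_mod_cast h2
  have hsle : 2 * s + 2 ≤ n := by
    have h1 : ((s:ℝ) + 2) ≤ ∑ k ∈ Finset.range (s+2), a k := by
      calc ((s:ℝ) + 2) = ∑ _k ∈ Finset.range (s+2), (1:ℝ) := by
            rw [Finset.sum_const, Finset.card_range]; push_cast; ring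
        _ ≤ _ := Finset.sum_le_sum fun k hk => ha1 k (Finset.mem_range.1 hk)
    rw [hsum_a] at h1
    have : 2 * (s:ℝ) + 2 ≤ (n:ℝ) := by linarith
    exact_mod_cast this
  have hak_le : ∀ k, k < s + 2 → a k ≤ (n:ℝ) - 2*s - 1 := by
    intro k hk
    have hkmem : k ∈ Finset.range (s+2) := Finset.mem_range.2 hk
    have hrest : ((s:ℝ) + 1) ≤ ∑ j ∈ (Finset.range (s+2)).erase k, a j := by
      calc ((s:ℝ) + 1) = ∑ _j ∈ (Finset.range (s+2)).erase k, (1:ℝ) := by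
            rw [Finset.sum_const, Finset.card_erase_of_mem hkmem]
            push_cast [Finset.card_range]; ring
        _ ≤ _ := Finset.sum_le_sum fun j hj =>
            ha1 j (Finset.mem_range.1 (Finset.mem_of_mem_erase hj))
    have hsplit : a k + ∑ j ∈ (Finset.range (s+2)).erase k, a j
        = ∑ j ∈ Finset.range (s+2), a j := Finset.add_sum_erase _ _ hkmem
    rw [hsum_a] at hsplit
    linarith
  have hdθ : ∀ k, k < s + 2 → 0 < θ + 1 - a k := by
    intro k hk
    have := hak_le k hk
    linarith
  have hdμ : ∀ k, k < s + 2 → 0 < μ + 1 - a k := by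
    intro k hk
    have := hdθ k hk
    linarith
  -- total sum decomposition
  have hTsum : T = W + ∑ k ∈ Finset.range (s+2), σ k := by
    have h1 : ∑ x ∈ univ \ S, v x = ∑ k ∈ Finset.range (s+2), σ k := by
      rw [← Finset.sum_fiberwise_of_maps_to (g := pt) (t := Finset.range (s+2))
        (fun x hx => Finset.mem_range.2 (hpt x (Finset.mem_sdiff.1 hx).2)) v]
      exact Finset.sum_congr rfl fun k _ => by rw [hσ, hPk k]
    rw [hT, hW, ← h1, ← Finset.sum_sdiff (Finset.subset_univ S)]
    ring
  -- W ≠ 0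
  have hW0 : W ≠ 0 := by
    intro hW0
    have hσ0 : ∀ k, k < s + 2 → σ k = 0 := by
      intro k hk
      have h3 := key3 k
      rw [hW0, mul_zero] at h3
      exact (mul_eq_zero.1 h3).resolve_left (ne_of_gt (hdμ k hk))
    have hT0 : T = 0 := by
      rw [hTsum, hW0, Finset.sum_congr rfl (fun k hk => hσ0 k (Finset.mem_range.1 hk))]
      simp
    apply hv
    funext u
    by_cases hu : u ∈ S
    · have := key1 u hu
      rw [hT0] at this
      have := mul_eq_zero.1 this
      simp only [Pi.zero_apply]
      rcases this with h | h
      · linarith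
      · exact h
    · have h2 := key2 u hu
      rw [hW0, hσ0 (pt u) (hpt u hu), add_zero] at h2
      have := mul_eq_zero.1 h2
      simp only [Pi.zero_apply]
      rcases this with h | h
      · linarith
      · exact h
  -- sum over S
  have keyS : (μ + 1) * W = s * T := by
    have h1 : ∑ u ∈ S, ((μ + 1) * v u) = ∑ u ∈ S, T :=
      Finset.sum_congr rfl fun u hu => key1 u hu
    rw [← Finset.mul_sum, ← hW, Finset.sum_const, nsmul_eq_mul] at h1
    exact h1
  -- sigma in terms of a
  have hσk : ∀ k, k < s + 2 → σ k = a k / (μ + 1 - a k) * W := by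
    intro k hk
    rw [div_mul_eq_mul_div, eq_div_iff (hdμ k hk).ne']
    linear_combination key3 k
  -- main equation
  have Emain : μ + 1 - s = s * ∑ k ∈ Finset.range (s+2), a k / (μ + 1 - a k) := by
    have h1 : (μ + 1 - s) * W = (s * ∑ k ∈ Finset.range (s+2), a k / (μ + 1 - a k)) * W := by
      have h2 : ∑ k ∈ Finset.range (s+2), σ k
          = (∑ k ∈ Finset.range (s+2), a k / (μ + 1 - a k)) * W := by
        rw [Finset.sum_mul]
        exact Finset.sum_congr rfl fun k hk => hσk k (Finset.mem_range.1 hk)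
      have h3 := keyS
      rw [hTsum] at h3
      rw [h2] at h3
      ring_nf
      ring_nf at h3
      linarith
    exact mul_right_cancel₀ hW0 h1
  -- comparison chain
  have B1 : ∑ k ∈ Finset.range (s+2), a k / (μ + 1 - a k)
      ≤ ∑ k ∈ Finset.range (s+2), a k / (θ + 1 - a k) := by
    refine Finset.sum_le_sum fun k hk => ?_
    have hk' := Finset.mem_range.1 hk
    rw [div_le_div_iff₀ (hdμ k hk') (hdθ k hk')]
    have h0a : 0 ≤ a k := le_trans zero_le_one (ha1 k hk')
    nlinarith [ha1 k hk']
  have B2 : ∑ k ∈ Finset.range (s+2), a k / (θ + 1 - a k)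
      ≤ ((n:ℝ) - 2*s - 1) / (θ + 2*s + 2 - n) + ((s:ℝ) + 1) / θ := by
    have hgen := aux_sum_g (θ + 1) (by linarith) (s+1) a
      (fun k hk => ha1 k (by omega))
      (by
        rw [show s + 1 + 1 = s + 2 from rfl, hsum_a]
        push_cast
        linarith)
    rw [show s + 1 + 1 = s + 2 from rfl, hsum_a] at hgen
    have e1 : (n:ℝ) - (s:ℝ) - ((s:ℕ)+1:ℕ) = (n:ℝ) - 2*s - 1 := by push_cast; ring
    have e2 : θ + 1 - ((n:ℝ) - 2*s - 1) = θ + 2*s + 2 - n := by ring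
    have e3 : θ + 1 - 1 = θ := by ring
    calc ∑ k ∈ Finset.range (s+2), a k / (θ + 1 - a k)
        ≤ ((n:ℝ) - (s:ℝ) - ((s:ℕ)+1:ℕ)) / (θ + 1 - ((n:ℝ) - (s:ℝ) - ((s:ℕ)+1:ℕ)))
          + ((s:ℕ)+1:ℕ) / (θ + 1 - 1) := by
          convert hgen using 3 <;> push_cast <;> ring
      _ = ((n:ℝ) - 2*s - 1) / (θ + 2*s + 2 - n) + ((s:ℝ) + 1) / θ := by
          rw [e3]
          rw [show ((n:ℝ) - (s:ℝ) - ((s:ℕ)+1:ℕ)) = (n:ℝ) - 2*s - 1 from by push_cast; ring, e2]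
          push_cast
          ring
  have B3 := aux_KI n s θ hroot hθ3 hn4 hn hs1 hsle
  have hs0 : (0:ℝ) ≤ s := by positivity
  have final : μ + 1 - s ≤ θ + 1 - s := by
    rw [Emain]
    calc (s:ℝ) * ∑ k ∈ Finset.range (s+2), a k / (μ + 1 - a k)
        ≤ (s:ℝ) * (((n:ℝ) - 2*s - 1) / (θ + 2*s + 2 - n) + ((s:ℝ) + 1) / θ) := by
          refine mul_le_mul_of_nonneg_left (le_trans B1 B2) hs0
      _ ≤ θ + 1 - s := B3
  linarith

section part2
variable (n : ℕ)

abbrev V2 (n : ℕ) := Fin 1 ⊕ (Fin (n - 3) ⊕ Fin 2)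

noncomputable def JG (n : ℕ) : SimpleGraph (V2 n) :=
  gJoin (⊤ : SimpleGraph (Fin 1)) ((⊤ : SimpleGraph (Fin (n - 3))) ⊕g (⊥ : SimpleGraph (Fin 2)))

def SJ (n : ℕ) : Finset (V2 n) := {Sum.inl 0}

def ptJ (n : ℕ) : V2 n → ℕ :=
  Sum.elim (fun _ => 0) (Sum.elim (fun _ => 0) (fun j => (j : ℕ) + 1))

lemma hadjJ (u v : V2 n) :
    (JG n).Adj u v ↔ u ≠ v ∧ (u ∈ SJ n ∨ v ∈ SJ n ∨ ptJ n u = ptJ n v) := by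
  rcases u with a | x <;> rcases v with b | y
  · constructor
    · intro h
      exact absurd (Subsingleton.elim a b) (by
        intro hab
        subst hab
        exact (JG n).irrefl h)
    · rintro ⟨hne, -⟩
      exact absurd (congrArg Sum.inl (Subsingleton.elim a b)) hne
  · simp only [JG, gJoin, SJ, ptJ, SimpleGraph.sup_adj, SimpleGraph.fromRel_adj]
    simp
    exact Or.inl (Subsingleton.elim a 0)
  · simp only [JG, gJoin, SJ, ptJ, SimpleGraph.sup_adj, SimpleGraph.fromRel_adj]
    simp
    exact Or.inl (Subsingleton.elim b 0)
  · rcases x with i | i <;> rcases y with j | j <;>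
      simp only [JG, gJoin, SJ, ptJ, SimpleGraph.sup_adj, SimpleGraph.fromRel_adj] <;>
      simp [Fin.val_inj] <;> omega
end part2


section part2b
variable (n : ℕ)

lemma cardV2 (hn4 : 4 ≤ n) : Fintype.card (V2 n) = n := by
  simp [Fintype.card_sum]
  omega

open scoped Classical in
lemma upperJ (hn4 : 4 ≤ n) (hn : 8 ≤ n ∨ n = 4) (θ : ℝ)
    (hroot : θ ^ 3 - ((n : ℝ) - 4) * θ ^ 2 - ((n : ℝ) - 1) * θ + 2 * ((n : ℝ) - 4) = 0)
    (hθ3 : (n : ℝ) - 3 < θ)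
    (μ : ℝ) (v : V2 n → ℝ) (hv : v ≠ 0)
    (heig : ∀ u : V2 n, ∑ j : V2 n, (if (JG n).Adj u j then (1:ℝ) else 0) * v j = μ * v u) :
    μ ≤ θ := by
  refine aux_core (JG n) (SJ n) (ptJ n) n (hadjJ n) (cardV2 n hn4) ?_ ?_ ?_ θ hroot hθ3 hn4 hn μ v hv heig
  · simp [SJ]
  · rintro (a | x | x) hv
    · simp [SJ] at hv
      exact absurd (Subsingleton.elim a 0) hv
    · simp [SJ, ptJ]
    · simp only [SJ, Finset.card_singleton, ptJ, Sum.elim_inr]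
      omega
  · intro k hk
    simp only [SJ, Finset.card_singleton] at hk
    interval_cases k
    · exact ⟨Sum.inr (Sum.inl ⟨0, by omega⟩), by simp [SJ], by simp [ptJ]⟩
    · exact ⟨Sum.inr (Sum.inr ⟨0, by omega⟩), by simp [SJ], by simp [ptJ]⟩
    · exact ⟨Sum.inr (Sum.inr ⟨1, by omega⟩), by simp [SJ], by simp [ptJ]⟩
end part2b

section part2c
variable (n : ℕ)

open scoped Classical in
lemma memJ (hn4 : 4 ≤ n) (θ : ℝ)
    (hroot : θ ^ 3 - ((n : ℝ) - 4) * θ ^ 2 - ((n : ℝ) - 1) * θ + 2 * ((n : ℝ) - 4) = 0)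
    (hθ3 : (n : ℝ) - 3 < θ) :
    ∃ v : V2 n → ℝ, v ≠ 0 ∧
      Matrix.mulVec (Matrix.of fun i j => if (JG n).Adj i j then (1:ℝ) else 0) v = θ • v := by
  have hn4' : (4:ℝ) ≤ n := by exact_mod_cast hn4
  have hc3 : ((n - 3 : ℕ) : ℝ) = (n:ℝ) - 3 := by
    rw [Nat.cast_sub (by omega)]; norm_num
  have hc4 : ((n - 3 - 1 : ℕ) : ℝ) = (n:ℝ) - 4 := by
    rw [Nat.sub_sub, Nat.cast_sub (by omega)]; norm_num
  have hn3 : (n:ℝ) - 3 ≠ 0 := by linarith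
  set t : ℝ := (θ^2 - 2)/((n:ℝ) - 3) with hts
  have htt : ((n:ℝ) - 3) * t = θ^2 - 2 := by
    rw [hts]; field_simp
  -- adjacency facts
  have hA1 : ∀ a b : Fin 1, ¬ (JG n).Adj (Sum.inl a) (Sum.inl b) := by
    intro a b h
    rw [hadjJ] at h
    exact h.1 (congrArg Sum.inl (Subsingleton.elim a b))
  have hA2 : ∀ (a : Fin 1) (x : Fin (n-3) ⊕ Fin 2), (JG n).Adj (Sum.inl a) (Sum.inr x) := by
    intro a x
    rw [hadjJ]
    exact ⟨by simp, Or.inl (by simp [SJ, Subsingleton.elim a 0])⟩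
  have hA2' : ∀ (a : Fin 1) (x : Fin (n-3) ⊕ Fin 2), (JG n).Adj (Sum.inr x) (Sum.inl a) :=
    fun a x => ((JG n).adj_symm (hA2 a x))
  have hA3 : ∀ i j : Fin (n-3), (JG n).Adj (Sum.inr (Sum.inl i)) (Sum.inr (Sum.inl j)) ↔ i ≠ j := by
    intro i j
    rw [hadjJ]
    constructor
    · rintro ⟨h1, -⟩ hij; exact h1 (by rw [hij])
    · intro hij
      exact ⟨by simp [hij], Or.inr (Or.inr rfl)⟩
  have hA4 : ∀ (i : Fin (n-3)) (j : Fin 2),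
      ¬ (JG n).Adj (Sum.inr (Sum.inl i)) (Sum.inr (Sum.inr j)) := by
    intro i j h
    rw [hadjJ] at h
    rcases h.2 with h' | h' | h' <;> simp [SJ, ptJ] at h'
  have hA4' : ∀ (i : Fin (n-3)) (j : Fin 2),
      ¬ (JG n).Adj (Sum.inr (Sum.inr j)) (Sum.inr (Sum.inl i)) :=
    fun i j h => hA4 i j ((JG n).adj_symm h)
  have hA5 : ∀ i j : Fin 2, ¬ (JG n).Adj (Sum.inr (Sum.inr i)) (Sum.inr (Sum.inr j)) := by
    intro i j h
    rw [hadjJ] at h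
    rcases h with ⟨h1, h2⟩
    rcases h2 with h' | h' | h'
    · simp [SJ] at h'
    · simp [SJ] at h'
    · simp only [ptJ, Sum.elim_inr] at h'
      have : i = j := by omega
      exact h1 (by rw [this])
  set w : V2 n → ℝ := Sum.elim (fun _ => θ) (Sum.elim (fun _ => t) (fun _ => 1)) with hws
  refine ⟨w, ?_, ?_⟩
  · intro h
    have := congrFun h (Sum.inr (Sum.inr 0))
    simp [hws] at this
  · funext u
    have hmv : (Matrix.mulVec (Matrix.of fun i j => if (JG n).Adj i j then (1:ℝ) else 0) w) u
        = ∑ j : V2 n, (if (JG n).Adj u j then (1:ℝ) else 0) * w j := rfl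
    rw [hmv]
    rw [Fintype.sum_sum_type]
    rcases u with a | i | i
    · -- apex
      have h1 : ∑ b : Fin 1, (if (JG n).Adj (Sum.inl a) (Sum.inl b) then (1:ℝ) else 0) * w (Sum.inl b) = 0 := by
        apply Finset.sum_eq_zero
        intro b _
        rw [if_neg (hA1 a b), zero_mul]
      have h2 : ∑ x : Fin (n-3) ⊕ Fin 2,
          (if (JG n).Adj (Sum.inl a) (Sum.inr x) then (1:ℝ) else 0) * w (Sum.inr x)
          = ((n:ℝ) - 3) * t + 2 := by
        rw [Fintype.sum_sum_type]
        have h21 : ∑ i : Fin (n-3),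
            (if (JG n).Adj (Sum.inl a) (Sum.inr (Sum.inl i)) then (1:ℝ) else 0) * w (Sum.inr (Sum.inl i))
            = ((n:ℝ) - 3) * t := by
          have : ∀ i : Fin (n-3),
              (if (JG n).Adj (Sum.inl a) (Sum.inr (Sum.inl i)) then (1:ℝ) else 0) * w (Sum.inr (Sum.inl i)) = t := by
            intro i; rw [if_pos (hA2 a _), one_mul]; rfl
          rw [Finset.sum_congr rfl (fun i _ => this i), Finset.sum_const, Finset.card_univ,
            Fintype.card_fin, nsmul_eq_mul, hc3]
        have h22 : ∑ j : Fin 2,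
            (if (JG n).Adj (Sum.inl a) (Sum.inr (Sum.inr j)) then (1:ℝ) else 0) * w (Sum.inr (Sum.inr j)) = 2 := by
          have : ∀ j : Fin 2,
              (if (JG n).Adj (Sum.inl a) (Sum.inr (Sum.inr j)) then (1:ℝ) else 0) * w (Sum.inr (Sum.inr j)) = 1 := by
            intro j; rw [if_pos (hA2 a _), one_mul]; rfl
          rw [Finset.sum_congr rfl (fun j _ => this j), Finset.sum_const, Finset.card_univ,
            Fintype.card_fin, nsmul_eq_mul]
          norm_num
        rw [h21, h22]
      rw [h1, h2, zero_add]
      have hwa : w (Sum.inl a) = θ := rfl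
      have : (θ • w) (Sum.inl a) = θ * θ := by rw [Pi.smul_apply, hwa, smul_eq_mul]
      rw [this, htt]
      ring
    · -- clique vertex i : Fin (n-3)
      have h1 : ∑ b : Fin 1, (if (JG n).Adj (Sum.inr (Sum.inl i)) (Sum.inl b) then (1:ℝ) else 0) * w (Sum.inl b) = θ := by
        rw [Fin.sum_univ_one, if_pos (hA2' _ _), one_mul]; rfl
      have h2 : ∑ x : Fin (n-3) ⊕ Fin 2,
          (if (JG n).Adj (Sum.inr (Sum.inl i)) (Sum.inr x) then (1:ℝ) else 0) * w (Sum.inr x)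
          = ((n:ℝ) - 4) * t := by
        rw [Fintype.sum_sum_type]
        have h21 : ∑ j : Fin (n-3),
            (if (JG n).Adj (Sum.inr (Sum.inl i)) (Sum.inr (Sum.inl j)) then (1:ℝ) else 0) * w (Sum.inr (Sum.inl j))
            = ((n:ℝ) - 4) * t := by
          have hterm : ∀ j : Fin (n-3),
              (if (JG n).Adj (Sum.inr (Sum.inl i)) (Sum.inr (Sum.inl j)) then (1:ℝ) else 0) * w (Sum.inr (Sum.inl j))
              = if j ∈ Finset.univ.erase i then t else 0 := by
            intro j
            by_cases hij : i = j
            · rw [if_neg (by rw [hA3]; simp [hij]), zero_mul, if_neg (by simp [hij])]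
            · rw [if_pos ((hA3 i j).2 hij), one_mul, if_pos (Finset.mem_erase.2 ⟨fun h => hij h.symm, Finset.mem_univ _⟩)]
              rfl
          rw [Finset.sum_congr rfl (fun j _ => hterm j), Finset.sum_ite_mem, Finset.univ_inter,
            Finset.sum_const, Finset.card_erase_of_mem (Finset.mem_univ i), Finset.card_univ,
            Fintype.card_fin, nsmul_eq_mul, hc4]
        have h22 : ∑ j : Fin 2,
            (if (JG n).Adj (Sum.inr (Sum.inl i)) (Sum.inr (Sum.inr j)) then (1:ℝ) else 0) * w (Sum.inr (Sum.inr j)) = 0 := by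
          apply Finset.sum_eq_zero
          intro j _
          rw [if_neg (hA4 i j), zero_mul]
        rw [h21, h22, add_zero]
      rw [h1, h2]
      have : (θ • w) (Sum.inr (Sum.inl i)) = θ * t := rfl
      rw [this]
      have : θ + ((n:ℝ) - 4) * t = θ * t := by
        have h5 : θ * (((n:ℝ) - 3) * t) = θ * (θ^2 - 2) := by rw [htt]
        have h6 : ((n:ℝ) - 4) * (((n:ℝ) - 3) * t) = ((n:ℝ) - 4) * (θ^2 - 2) := by rw [htt]
        have h7 : ((n:ℝ) - 3) * (θ + ((n:ℝ)-4)*t) = ((n:ℝ) - 3) * (θ * t) := by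
          nlinarith [hroot, h5, h6]
        exact mul_left_cancel₀ hn3 h7
      rw [← this]
    · -- pendant vertex i : Fin 2
      have h1 : ∑ b : Fin 1, (if (JG n).Adj (Sum.inr (Sum.inr i)) (Sum.inl b) then (1:ℝ) else 0) * w (Sum.inl b) = θ := by
        rw [Fin.sum_univ_one, if_pos (hA2' _ _), one_mul]; rfl
      have h2 : ∑ x : Fin (n-3) ⊕ Fin 2,
          (if (JG n).Adj (Sum.inr (Sum.inr i)) (Sum.inr x) then (1:ℝ) else 0) * w (Sum.inr x) = 0 := by
        rw [Fintype.sum_sum_type]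
        rw [Finset.sum_eq_zero (fun j _ => by rw [if_neg (hA4' j i), zero_mul]),
          Finset.sum_eq_zero (fun j _ => by rw [if_neg (hA5 i j), zero_mul]), add_zero]
      rw [h1, h2, add_zero]
      have : (θ • w) (Sum.inr (Sum.inr i)) = θ * 1 := rfl
      rw [this, mul_one]
end part2c

open scoped Classical in
lemma specRadJ (n : ℕ) (hn4 : 4 ≤ n) (hn : 8 ≤ n ∨ n = 4) (θ : ℝ)
    (hroot : θ ^ 3 - ((n : ℝ) - 4) * θ ^ 2 - ((n : ℝ) - 1) * θ + 2 * ((n : ℝ) - 4) = 0)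
    (hθ3 : (n : ℝ) - 3 < θ) :
    specRad (JG n) = θ := by
  have hn4' : (4:ℝ) ≤ n := by exact_mod_cast hn4
  have hθpos : (0:ℝ) ≤ θ := by linarith
  have hub : ∀ μ ∈ {μ : ℝ | ∃ v : V2 n → ℝ, v ≠ 0 ∧
      Matrix.mulVec (Matrix.of fun i j => if (JG n).Adj i j then (1:ℝ) else 0) v = μ • v}, μ ≤ θ := by
    rintro μ ⟨v, hv, hveq⟩
    apply upperJ n hn4 hn θ hroot hθ3 μ v hv
    intro u
    have h := congrFun hveq u
    simpa [Matrix.mulVec, dotProduct] using h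
  rw [specRad]
  apply le_antisymm
  · exact Real.sSup_le hub hθpos
  · obtain ⟨v, hv, hveq⟩ := memJ n hn4 θ hroot hθ3
    exact le_csSup ⟨θ, fun x hx => hub x hx⟩ ⟨v, hv, hveq⟩

open Matrix in
open scoped Classical in
private theorem aux_part1 (n : ℕ)
    (hn : 8 ≤ n ∨ n = 4) (G : SimpleGraph (Fin n)) (hconn : G.Connected)
    (S : Set (Fin n)) (hS : S.ncard + 2 ≤ oddComp (G.induce Sᶜ))
    (θ : ℝ)
    (hθroot : θ ^ 3 - ((n : ℝ) - 4) * θ ^ 2 - ((n : ℝ) - 1) * θ + 2 * ((n : ℝ) - 4) = 0)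
    (hθ3 : (n : ℝ) - 3 < θ) :
    specRad G ≤ θ := by
  have hn4 : 4 ≤ n := by rcases hn with h | h <;> omega
  have hn4' : (4:ℝ) ≤ n := by exact_mod_cast hn4
  have hθpos : (0:ℝ) ≤ θ := by linarith
  classical
  set Sf : Finset (Fin n) := S.toFinset with hSfdef
  have hSf : Sf.card = S.ncard := (Set.ncard_eq_toFinset_card' S).symm
  set s : ℕ := Sf.card with hsdef
  set C := (G.induce Sᶜ).ConnectedComponent with hCdef
  letI : Fintype C := Fintype.ofFinite C
  have hoc : s + 2 ≤ Fintype.card C := by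
    have h1 : oddComp (G.induce Sᶜ) ≤ Nat.card C := Finite.card_subtype_le _
    rw [Nat.card_eq_fintype_card] at h1
    omega
  have hs1 : 1 ≤ s := by
    by_contra hcon
    have hs0 : S = ∅ := by
      rw [← Set.ncard_eq_zero (Set.toFinite S)]
      omega
    have hcompl : Sᶜ = (Set.univ : Set (Fin n)) := by rw [hs0, Set.compl_empty]
    have hconn' : (G.induce Sᶜ).Connected := by
      rw [hcompl]
      exact (Iso.connected_iff (induceUnivIso G)).2 hconn
    have hsub : Subsingleton C := by
      constructor
      intro c d
      refine ConnectedComponent.ind₂ (fun u w => ?_) c d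
      exact ConnectedComponent.sound (hconn'.preconnected u w)
    have : Fintype.card C ≤ 1 := Fintype.card_le_one_iff_subsingleton.2 hsub
    omega
  -- embedding of s+1 components
  obtain ⟨φ⟩ : Nonempty (Fin (s+1) ↪ C) := by
    apply Function.Embedding.nonempty_of_card_le
    rw [Fintype.card_fin]
    omega
  obtain ⟨c0, hc0⟩ : ∃ c : C, c ∉ Set.range φ := by
    by_contra hcon
    push_neg at hcon
    have hsurj : Function.Surjective φ := fun c => hcon c
    have := Fintype.card_le_of_surjective φ hsurj
    rw [Fintype.card_fin] at this
    omega
  set ptC : C → ℕ := fun c =>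
    if h : ∃ k : Fin (s+1), φ k = c then ((h.choose : Fin (s+1)) : ℕ) + 1 else 0 with hptC
  set pt : Fin n → ℕ := fun x =>
    if hx : x ∈ Sᶜ then ptC ((G.induce Sᶜ).connectedComponentMk ⟨x, hx⟩) else 0 with hpt
  set H : SimpleGraph (Fin n) :=
    { Adj := fun u w => u ≠ w ∧ (u ∈ Sf ∨ w ∈ Sf ∨ pt u = pt w)
      symm := ⟨by
        intro u w h
        refine ⟨h.1.symm, ?_⟩
        rcases h.2 with h' | h' | h'
        · exact Or.inr (Or.inl h')
        · exact Or.inl h'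
        · exact Or.inr (Or.inr h'.symm)⟩
      loopless := ⟨fun u h => h.1 rfl⟩ } with hH
  have hadjH : ∀ u w : Fin n, H.Adj u w ↔ u ≠ w ∧ (u ∈ Sf ∨ w ∈ Sf ∨ pt u = pt w) :=
    fun u w => Iff.rfl
  have hmemSf : ∀ x : Fin n, x ∈ Sf ↔ x ∈ S := by
    intro x
    rw [hSfdef, Set.mem_toFinset]
  have hptlt : ∀ x : Fin n, x ∉ Sf → pt x < s + 2 := by
    intro x hx
    have hxc : x ∈ Sᶜ := by
      rw [Set.mem_compl_iff]
      rw [hmemSf] at hx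
      exact hx
    rw [hpt]
    simp only
    rw [dif_pos hxc, hptC]
    simp only
    by_cases h : ∃ k : Fin (s+1), φ k = (G.induce Sᶜ).connectedComponentMk ⟨x, hxc⟩
    · rw [dif_pos h]
      have := (h.choose).2
      omega
    · rw [dif_neg h]
      omega
  have hneH : ∀ k, k < s + 2 → ∃ x : Fin n, x ∉ Sf ∧ pt x = k := by
    intro k hk
    rcases k with _ | j
    · obtain ⟨y, hy⟩ := c0.exists_rep
      refine ⟨y.1, ?_, ?_⟩
      · rw [hmemSf]
        exact y.2
      · have hyc : (y.1 : Fin n) ∈ Sᶜ := y.2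
        rw [hpt]
        simp only
        rw [dif_pos hyc]
        have hyy : (⟨y.1, hyc⟩ : ↥Sᶜ) = y := Subtype.ext rfl
        have hy2 : (G.induce Sᶜ).connectedComponentMk y = c0 := by exact hy
        rw [hyy, hy2, hptC]
        simp only
        rw [dif_neg]
        intro hcon
        exact hc0 ⟨hcon.choose, hcon.choose_spec⟩
    · have hj : j < s + 1 := by omega
      obtain ⟨y, hy⟩ := (φ ⟨j, hj⟩).exists_rep
      refine ⟨y.1, ?_, ?_⟩
      · rw [hmemSf]
        exact y.2
      · have hyc : (y.1 : Fin n) ∈ Sᶜ := y.2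
        rw [hpt]
        simp only
        rw [dif_pos hyc]
        have hyy : (⟨y.1, hyc⟩ : ↥Sᶜ) = y := Subtype.ext rfl
        have hy2 : (G.induce Sᶜ).connectedComponentMk y = φ ⟨j, hj⟩ := by exact hy
        rw [hyy, hy2, hptC]
        simp only
        have hex : ∃ k : Fin (s+1), φ k = φ ⟨j, hj⟩ := ⟨⟨j, hj⟩, rfl⟩
        rw [dif_pos hex]
        have := φ.injective hex.choose_spec
        rw [this]
  have hGH : ∀ u w : Fin n, G.Adj u w → H.Adj u w := by
    intro u w hG
    refine ⟨G.ne_of_adj hG, ?_⟩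
    by_cases hu : u ∈ Sf
    · exact Or.inl hu
    by_cases hw : w ∈ Sf
    · exact Or.inr (Or.inl hw)
    refine Or.inr (Or.inr ?_)
    have huc : u ∈ Sᶜ := by rw [Set.mem_compl_iff, ← hmemSf]; exact hu
    have hwc : w ∈ Sᶜ := by rw [Set.mem_compl_iff, ← hmemSf]; exact hw
    have hadj' : (G.induce Sᶜ).Adj ⟨u, huc⟩ ⟨w, hwc⟩ := by
      simp only [comap_adj, Function.Embedding.coe_subtype]
      exact hG
    have hmk : (G.induce Sᶜ).connectedComponentMk ⟨u, huc⟩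
        = (G.induce Sᶜ).connectedComponentMk ⟨w, hwc⟩ :=
      ConnectedComponent.sound hadj'.reachable
    rw [hpt]
    simp only
    rw [dif_pos huc, dif_pos hwc, hmk]
  -- Hermitian matrix for H
  set AH : Matrix (Fin n) (Fin n) ℝ := Matrix.of fun i j => if H.Adj i j then (1:ℝ) else 0
    with hAH
  have hsymH : AH.IsHermitian := by
    unfold Matrix.IsHermitian
    ext i j
    simp only [Matrix.conjTranspose_apply, hAH, Matrix.of_apply, star_trivial]
    refine if_congr ?_ rfl rfl
    constructor <;> rintro ⟨h1, h2⟩ <;> exact ⟨Ne.symm h1, by tauto⟩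
  have hcoreH : ∀ (μ : ℝ) (w : Fin n → ℝ), w ≠ 0 → AH *ᵥ w = μ • w → μ ≤ θ := by
    intro μ w hw0 hweq
    refine aux_core H Sf pt n hadjH (by simp) hs1 hptlt hneH θ hθroot hθ3 hn4 hn μ w hw0 ?_
    intro u
    have h := congrFun hweq u
    simpa [Matrix.mulVec, dotProduct, hAH] using h
  -- upper bound on every eigenvalue of G
  rw [specRad]
  apply Real.sSup_le _ hθpos
  rintro μ ⟨v, hv, hveq⟩
  set av : Fin n → ℝ := fun i => |v i| with hav
  set AG : Matrix (Fin n) (Fin n) ℝ := Matrix.of fun i j => if G.Adj i j then (1:ℝ) else 0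
    with hAG
  have hd : (0:ℝ) < v ⬝ᵥ v := by
    obtain ⟨i0, hi0⟩ := Function.ne_iff.1 hv
    have hi0' : v i0 ≠ 0 := by simpa using hi0
    have h1 : v i0 * v i0 ≤ ∑ i, v i * v i :=
      Finset.single_le_sum (f := fun i => v i * v i) (fun i _ => mul_self_nonneg (v i))
        (Finset.mem_univ i0)
    have h2 : 0 < v i0 * v i0 := mul_self_pos.2 hi0'
    show (0:ℝ) < ∑ i, v i * v i
    linarith
  have heq1 : v ⬝ᵥ (AG *ᵥ v) = μ * (v ⬝ᵥ v) := by
    rw [(hveq : AG *ᵥ v = μ • v), dotProduct_smul, smul_eq_mul]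
  have heq2 : v ⬝ᵥ (AG *ᵥ v) ≤ av ⬝ᵥ (AH *ᵥ av) := by
    show ∑ i, v i * ((AG *ᵥ v) i) ≤ ∑ i, av i * ((AH *ᵥ av) i)
    refine Finset.sum_le_sum fun i _ => ?_
    show v i * ∑ j, AG i j * v j ≤ av i * ∑ j, AH i j * av j
    rw [Finset.mul_sum, Finset.mul_sum]
    refine Finset.sum_le_sum fun j _ => ?_
    show v i * (AG i j * v j) ≤ av i * (AH i j * av j)
    have hG01 : AG i j = if G.Adj i j then (1:ℝ) else 0 := rfl
    have hH01 : AH i j = if H.Adj i j then (1:ℝ) else 0 := rfl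
    rw [hG01, hH01]
    by_cases hadjG : G.Adj i j
    · rw [if_pos hadjG, if_pos (hGH _ _ hadjG), one_mul, one_mul]
      calc v i * v j ≤ |v i * v j| := le_abs_self _
        _ = av i * av j := by rw [hav]; exact abs_mul _ _
    · rw [if_neg hadjG]
      have h1 : v i * (0 * v j) = 0 := by ring
      rw [h1]
      by_cases hadjH' : H.Adj i j
      · rw [if_pos hadjH', one_mul]
        positivity
      · rw [if_neg hadjH']
        have h2 : av i * (0 * av j) = 0 := by ring
        rw [h2]
  have heq3 : av ⬝ᵥ (AH *ᵥ av) ≤ θ * (av ⬝ᵥ av) := aux_rayleigh AH hsymH θ hcoreH av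
  have heq4 : av ⬝ᵥ av = v ⬝ᵥ v := by
    show ∑ i, av i * av i = ∑ i, v i * v i
    exact Finset.sum_congr rfl fun i _ => by rw [hav]; exact abs_mul_abs_self _
  have hfinal : μ * (v ⬝ᵥ v) ≤ θ * (v ⬝ᵥ v) := by
    rw [← heq1, ← heq4]
    exact le_trans heq2 heq3
  exact le_of_mul_le_mul_right (by linarith [hfinal]) hd


theorem spectral_bound_of_many_odd_components (n : ℕ) (hnev : Even n)
    (hn : 8 ≤ n ∨ n = 4) (G : SimpleGraph (Fin n)) (hconn : G.Connected)
    (S : Set (Fin n)) (hS : S.ncard + 2 ≤ oddComp (G.induce Sᶜ))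
    (θ : ℝ)
    (hθroot : θ ^ 3 - ((n : ℝ) - 4) * θ ^ 2 - ((n : ℝ) - 1) * θ + 2 * ((n : ℝ) - 4) = 0)
    (hθmax : ∀ x : ℝ,
      x ^ 3 - ((n : ℝ) - 4) * x ^ 2 - ((n : ℝ) - 1) * x + 2 * ((n : ℝ) - 4) = 0 → x ≤ θ) :
    specRad G ≤ θ ∧
    specRad (gJoin (⊤ : SimpleGraph (Fin 1))
      ((⊤ : SimpleGraph (Fin (n - 3))) ⊕g (⊥ : SimpleGraph (Fin 2)))) = θ := by
  have hn4 : 4 ≤ n := by rcases hn with h | h <;> omega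
  have hθ3 : (n : ℝ) - 3 < θ := aux_theta_lb n θ hn4 hθmax
  constructor
  · exact aux_part1 n hn G hconn S hS θ hθroot hθ3
  · exact specRadJ n hn4 hn θ hθroot hθ3
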